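/- Let W be a finite-dimensional irreducible complex representation of the infinite dihedral group Γ = ⟨s, t | s² = t² = 1⟩, and set p = (s+1)/2 and q = (t+1)/2 as elements of End(W) (acting via the representation). Then there exists a nonzero scalar z ∈ ℂ such that z⁻¹ · pq is an idempotent endomorphism of W. -/

import Mathlib

/-- The infinite dihedral group, presented as `⟨s, t | s² = t² = 1⟩`. -/
def InfDihedral : Type :=
  PresentedGroup ({FreeGroup.of true * FreeGroup.of true,
    FreeGroup.of false * FreeGroup.of false} : Set (FreeGroup Bool))

noncomputable instance : Group InfDihedral :=
  inferInstanceAs (Group (PresentedGroup _))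

/-- The generator `s` of the infinite dihedral group. -/
noncomputable def InfDihedral.s : InfDihedral := PresentedGroup.of true

/-- The generator `t` of the infinite dihedral group. -/
noncomputable def InfDihedral.t : InfDihedral := PresentedGroup.of false

theorem InfDihedral.s_mul_s : InfDihedral.s * InfDihedral.s = 1 := by
  show (QuotientGroup.mk (FreeGroup.of true) * QuotientGroup.mk (FreeGroup.of true) :
    PresentedGroup _) = 1
  show (QuotientGroup.mk (FreeGroup.of true * FreeGroup.of true) :
      FreeGroup Bool ⧸ Subgroup.normalClosure ({FreeGroup.of true * FreeGroup.of true,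
      FreeGroup.of false * FreeGroup.of false} : Set (FreeGroup Bool))) = 1
  exact (QuotientGroup.eq_one_iff _).mpr
    (Subgroup.subset_normalClosure (Set.mem_insert _ _))

theorem InfDihedral.t_mul_t : InfDihedral.t * InfDihedral.t = 1 := by
  show (QuotientGroup.mk (FreeGroup.of false) * QuotientGroup.mk (FreeGroup.of false) :
    PresentedGroup _) = 1
  show (QuotientGroup.mk (FreeGroup.of false * FreeGroup.of false) :
      FreeGroup Bool ⧸ Subgroup.normalClosure ({FreeGroup.of true * FreeGroup.of true,
      FreeGroup.of false * FreeGroup.of false} : Set (FreeGroup Bool))) = 1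
  exact (QuotientGroup.eq_one_iff _).mpr
    (Subgroup.subset_normalClosure (Set.mem_insert_of_mem _ rfl))

theorem InfDihedral.induction (P : InfDihedral → Prop) (hs : P InfDihedral.s)
    (ht : P InfDihedral.t) (hmul : ∀ a b, P a → P b → P (a * b))
    (hinv : ∀ a, P a → P a⁻¹) (g : InfDihedral) : P g := by
  have hrange : Set.range (PresentedGroup.of :
      Bool → PresentedGroup ({FreeGroup.of true * FreeGroup.of true,
        FreeGroup.of false * FreeGroup.of false} : Set (FreeGroup Bool))) =
      {InfDihedral.s, InfDihedral.t} := by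
    ext x
    constructor
    · rintro ⟨b, rfl⟩
      cases b
      · exact Or.inr rfl
      · exact Or.inl rfl
    · rintro (rfl | rfl)
      · exact ⟨true, rfl⟩
      · exact ⟨false, rfl⟩
  have hg : g ∈ Subgroup.closure ({InfDihedral.s, InfDihedral.t} : Set InfDihedral) := by
    rw [show ({InfDihedral.s, InfDihedral.t} : Set InfDihedral) = Set.range PresentedGroup.of from
      hrange.symm]
    erw [PresentedGroup.closure_range_of]
    trivial
  induction hg using Subgroup.closure_induction with
  | mem x hx => rcases hx with rfl | rfl
                · exact hs
                · exact ht
  | one => exact InfDihedral.s_mul_s ▸ hmul _ _ hs hs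
  | mul a b _ _ ha hb => exact hmul a b ha hb
  | inv a _ ha => exact hinv a ha


/-- For a finite-dimensional irreducible complex representation `W` of the infinite
dihedral group, setting `p = (ρ(s)+1)/2` and `q = (ρ(t)+1)/2`, there is a nonzero
scalar `z ∈ ℂ` such that `z⁻¹ • (p * q)` is an idempotent endomorphism of `W`. -/
theorem exists_scalar_idempotent_infDihedral
    (W : Type) [AddCommGroup W] [Module ℂ W] [FiniteDimensional ℂ W] [Nontrivial W]
    (ρ : Representation ℂ InfDihedral W)
    (hirr : ∀ p : Submodule ℂ W, (∀ g : InfDihedral, ∀ x ∈ p, ρ g x ∈ p) →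
      p = ⊥ ∨ p = ⊤)
    (p q : Module.End ℂ W)
    (hp : p = (2 : ℂ)⁻¹ • (ρ InfDihedral.s + 1))
    (hq : q = (2 : ℂ)⁻¹ • (ρ InfDihedral.t + 1)) :
    ∃ z : ℂ, z ≠ 0 ∧ IsIdempotentElem (z⁻¹ • (p * q)) := by
  set S : Module.End ℂ W := ρ InfDihedral.s with hSdef
  set T : Module.End ℂ W := ρ InfDihedral.t with hTdef
  have hS : S * S = 1 := by
    rw [hSdef, ← map_mul, InfDihedral.s_mul_s, map_one]
  have hT : T * T = 1 := by
    rw [hTdef, ← map_mul, InfDihedral.t_mul_t, map_one]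
  set Z : Module.End ℂ W := S * T + T * S with hZdef
  -- Z commutes with everything
  have swap : ∀ X Y : Module.End ℂ W, X * X = 1 → X * (X * Y + Y * X) = (X * Y + Y * X) * X := by
    intro X Y h
    simp only [mul_add, add_mul, ← mul_assoc]
    rw [h, one_mul, mul_assoc Y, h, mul_one, add_comm]
  have hcomm : ∀ g : InfDihedral, ρ g * Z = Z * ρ g := by
    apply InfDihedral.induction (fun g => ρ g * Z = Z * ρ g)
    · show S * Z = Z * S
      rw [hZdef]
      exact swap S T hS
    · show T * Z = Z * T
      rw [hZdef, show S * T + T * S = T * S + S * T from add_comm _ _]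
      exact swap T S hT
    · intro a b ha hb
      rw [map_mul, mul_assoc, hb, ← mul_assoc, ha, mul_assoc]
    · intro a ha
      have h1 : ρ a⁻¹ * ρ a = 1 := by rw [← map_mul, inv_mul_cancel, map_one]
      have h2 : ρ a * ρ a⁻¹ = 1 := by rw [← map_mul, mul_inv_cancel, map_one]
      calc ρ a⁻¹ * Z = ρ a⁻¹ * Z * (ρ a * ρ a⁻¹) := by rw [h2, mul_one]
        _ = ρ a⁻¹ * (ρ a * Z) * ρ a⁻¹ := by rw [ha]; noncomm_ring
        _ = Z * ρ a⁻¹ := by rw [← mul_assoc, h1, one_mul]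
  -- Schur: Z is a scalar μ
  obtain ⟨μ, hμ⟩ := Module.End.exists_eigenvalue Z
  have hEtop : Module.End.eigenspace Z μ = ⊤ := by
    have hinvE : ∀ g : InfDihedral, ∀ x ∈ Module.End.eigenspace Z μ,
        ρ g x ∈ Module.End.eigenspace Z μ := by
      intro g x hx
      rw [Module.End.mem_eigenspace_iff] at hx ⊢
      have h0 : Z (ρ g x) = (Z * ρ g) x := rfl
      rw [h0, ← hcomm g]
      show ρ g (Z x) = μ • ρ g x
      rw [hx, map_smul]
    rcases hirr (Module.End.eigenspace Z μ) hinvE with h | h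
    · exact absurd h hμ
    · exact h
  have hZeq : S * T + T * S = μ • (1 : Module.End ℂ W) := by
    ext w
    have hw : w ∈ Module.End.eigenspace Z μ := hEtop ▸ Submodule.mem_top
    rw [Module.End.mem_eigenspace_iff, hZdef] at hw
    simpa using hw
  -- express S, T in terms of p, q
  have hS' : S = (2 : ℂ) • p - 1 := by
    rw [hp, smul_smul]
    norm_num
  have hT' : T = (2 : ℂ) • q - 1 := by
    rw [hq, smul_smul]
    norm_num
  have hpp : p * p = p := by
    rw [hp]
    simp only [smul_mul_assoc, mul_smul_comm, smul_smul, add_mul, mul_add, hS, one_mul, mul_one]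
    module
  have hqq : q * q = q := by
    rw [hq]
    simp only [smul_mul_assoc, mul_smul_comm, smul_smul, add_mul, mul_add, hT, one_mul, mul_one]
    module
  -- the key linear relation
  have hqp4 : (4 : ℂ) • (q * p) = (μ - 2) • (1 : Module.End ℂ W)
      + (4 : ℂ) • p + (4 : ℂ) • q - (4 : ℂ) • (p * q) := by
    rw [hS', hT'] at hZeq
    simp only [sub_mul, mul_sub, smul_mul_assoc, mul_smul_comm, smul_smul, one_mul,
      mul_one] at hZeq
    linear_combination (norm := module) hZeq
  have hppq : p * (p * q) = p * q := by rw [← mul_assoc, hpp]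
  have key1 : (4 : ℂ) • ((p * q) * (p * q)) = (μ + 2) • (p * q) := by
    have h0 : (4 : ℂ) • ((p * q) * (p * q)) = p * ((4 : ℂ) • (q * p)) * q := by
      simp only [mul_smul_comm, smul_mul_assoc]
      noncomm_ring
    rw [h0, hqp4]
    simp only [mul_add, add_mul, mul_sub, sub_mul, smul_mul_assoc, mul_smul_comm,
      mul_one, one_mul, mul_assoc, hqq, hppq]
    module
  have key2 : (4 : ℂ) • (q * (p * q)) = (μ + 2) • q := by
    have h0 : (4 : ℂ) • (q * (p * q)) = ((4 : ℂ) • (q * p)) * q := by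
      simp only [smul_mul_assoc]
      noncomm_ring
    rw [h0, hqp4]
    simp only [mul_add, add_mul, mul_sub, sub_mul, smul_mul_assoc, mul_smul_comm,
      mul_one, one_mul, mul_assoc, hqq, hppq]
    module
  set ζ : ℂ := (μ + 2) / 4 with hζdef
  have hsq : (p * q) * (p * q) = ζ • (p * q) := by
    have := congrArg (fun x => (4 : ℂ)⁻¹ • x) key1
    simp only [smul_smul] at this
    norm_num at this
    rw [this, hζdef]
    congr 1
    ring
  by_cases hζ : ζ = 0
  · -- nilpotent case: show p*q = 0
    have hsq0 : (p * q) * (p * q) = 0 := by rw [hsq, hζ, zero_smul]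
    have hqpq : q * (p * q) = 0 := by
      have h4 : (4 : ℂ) • (q * (p * q)) = 0 := by
        rw [key2]
        have : μ + 2 = 0 := by
          have := hζ
          rw [hζdef, div_eq_zero_iff] at this
          rcases this with h | h
          · exact h
          · norm_num at h
        rw [this, zero_smul]
      have := smul_eq_zero.mp h4
      rcases this with h | h
      · norm_num at h
      · exact h
    have hSpq : S * (p * q) = p * q := by
      rw [hS', sub_mul, smul_mul_assoc, hppq, one_mul]
      module
    have hTpq : T * (p * q) = -(p * q) := by
      rw [hT', sub_mul, smul_mul_assoc, hqpq, one_mul, smul_zero, zero_sub]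
    have hsign : ∀ g : InfDihedral, ρ g * (p * q) = p * q ∨ ρ g * (p * q) = -(p * q) := by
      apply InfDihedral.induction
        (fun g => ρ g * (p * q) = p * q ∨ ρ g * (p * q) = -(p * q))
      · exact Or.inl hSpq
      · exact Or.inr hTpq
      · intro a b ha hb
        have hab : ρ (a * b) * (p * q) = ρ a * (ρ b * (p * q)) := by
          rw [map_mul, mul_assoc]
        rcases hb with hb | hb <;> rcases ha with ha | ha
        · exact Or.inl (by rw [hab, hb, ha])
        · exact Or.inr (by rw [hab, hb, ha])
        · exact Or.inr (by rw [hab, hb, mul_neg, ha])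
        · exact Or.inl (by rw [hab, hb, mul_neg, ha, neg_neg])
      · intro a ha
        have h1 : ρ a⁻¹ * ρ a = 1 := by rw [← map_mul, inv_mul_cancel, map_one]
        rcases ha with ha | ha
        · left
          calc ρ a⁻¹ * (p * q) = ρ a⁻¹ * (ρ a * (p * q)) := by rw [ha]
            _ = (ρ a⁻¹ * ρ a) * (p * q) := by rw [mul_assoc]
            _ = p * q := by rw [h1, one_mul]
        · right
          calc ρ a⁻¹ * (p * q) = ρ a⁻¹ * -(ρ a * (p * q)) := by rw [ha, neg_neg]
            _ = -((ρ a⁻¹ * ρ a) * (p * q)) := by rw [mul_neg, mul_assoc]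
            _ = -(p * q) := by rw [h1, one_mul]
    have hinv : ∀ g : InfDihedral, ∀ x ∈ LinearMap.range (p * q),
        ρ g x ∈ LinearMap.range (p * q) := by
      rintro g x ⟨v, rfl⟩
      rcases hsign g with h | h
      · exact ⟨v, by rw [← Module.End.mul_apply, h]⟩
      · refine ⟨-v, ?_⟩
        rw [← Module.End.mul_apply, h]
        simp
    rcases hirr _ hinv with h | h
    · have hpq0 : p * q = 0 := LinearMap.range_eq_bot.mp h
      refine ⟨1, one_ne_zero, ?_⟩
      rw [hpq0]
      simp only [smul_zero]
      exact IsIdempotentElem.zero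
    · exfalso
      have hsurj : Function.Surjective (p * q) := LinearMap.range_eq_top.mp h
      have hsurj2 : Function.Surjective ((p * q) * (p * q) : Module.End ℂ W) := by
        intro y
        obtain ⟨v, hv⟩ := hsurj y
        obtain ⟨u, hu⟩ := hsurj v
        exact ⟨u, by rw [Module.End.mul_apply, hu, hv]⟩
      rw [hsq0] at hsurj2
      obtain ⟨a, b, hab⟩ := exists_pair_ne W
      obtain ⟨u, hu⟩ := hsurj2 a
      obtain ⟨v, hv⟩ := hsurj2 b
      simp only [LinearMap.zero_apply] at hu hv
      exact hab (hu ▸ hv ▸ rfl)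
  · refine ⟨ζ, hζ, ?_⟩
    show (ζ⁻¹ • (p * q)) * (ζ⁻¹ • (p * q)) = ζ⁻¹ • (p * q)
    rw [smul_mul_assoc, mul_smul_comm, smul_smul, hsq, smul_smul]
    congr 1
    field_simp
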